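/- Let Ω ⊆ ℝ^n be an open connected set and A : Ω → so(n) a continuously differentiable skew-symmetric matrix field. Then the generalized Curl of A vanishes identically on Ω (i.e., ∂_i A_{kj} = ∂_j A_{ki} for all i,j,k) if and only if A is constant. -/

import Mathlib

open Matrix

/-- Partial derivative `∂ₖ f` of a scalar field on `ℝⁿ`. -/
noncomputable def pd {n : ℕ} (f : (Fin n → ℝ) → ℝ) (k : Fin n)
    (x : Fin n → ℝ) : ℝ :=
  fderiv ℝ f x (Pi.single k 1)

/-- For a C¹ skew-symmetric matrix field `A` on an open connected set `Ω`,
the generalized Curl of `A` vanishes identically on `Ω` iff `A` is constant. -/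
theorem curl_eq_zero_iff_const {n : ℕ} (Ω : Set (Fin n → ℝ))
    (hΩ : IsOpen Ω) (hconn : IsConnected Ω)
    (A : (Fin n → ℝ) → Matrix (Fin n) (Fin n) ℝ)
    (hA : ∀ i j, ContDiffOn ℝ 1 (fun x => A x i j) Ω)
    (hskew : ∀ x ∈ Ω, (A x)ᵀ = -(A x)) :
    (∀ x ∈ Ω, ∀ i j k : Fin n,
        pd (fun y => A y k j) i x = pd (fun y => A y k i) j x) ↔
      ∃ A₀ : Matrix (Fin n) (Fin n) ℝ, ∀ x ∈ Ω, A x = A₀ := by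
  constructor
  · intro hcurl
    -- skew symmetry of the values
    have hskew' : ∀ x ∈ Ω, ∀ b c, A x b c = -(A x c b) := by
      intro x hx b c
      have := congrFun (congrFun (hskew x hx) c) b
      simpa [Matrix.transpose_apply] using this
    -- skew symmetry of the derivatives
    have hsk : ∀ x ∈ Ω, ∀ a b c : Fin n,
        pd (fun y => A y b c) a x = -pd (fun y => A y c b) a x := by
      intro x hx a b c
      have hev : (fun y => A y b c) =ᶠ[nhds x] (fun y => -(A y c b)) := by
        filter_upwards [hΩ.mem_nhds hx] with y hy using hskew' y hy b c
      have hfe : fderiv ℝ (fun y => A y b c) x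
          = fderiv ℝ (fun y => -(A y c b)) x := hev.fderiv_eq
      simp only [pd, hfe, fderiv_neg]
      simp
    -- all partial derivatives vanish
    have hD : ∀ x ∈ Ω, ∀ i k j : Fin n, pd (fun y => A y k j) i x = 0 := by
      intro x hx i k j
      have h1 := hcurl x hx i j k
      have h2 := hsk x hx j k i
      have h3 := hcurl x hx j k i
      have h4 := hsk x hx k i j
      have h5 := hcurl x hx k i j
      have h6 := hsk x hx i j k
      linarith
    -- hence each entry has vanishing full derivative on Ω
    have hfd : ∀ x ∈ Ω, ∀ k j : Fin n, fderiv ℝ (fun y => A y k j) x = 0 := by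
      intro x hx k j
      set L := fderiv ℝ (fun y => A y k j) x with hL
      have hLi : ∀ i : Fin n, L (Pi.single i 1) = 0 := fun i => hD x hx i k j
      have : (L : (Fin n → ℝ) →ₗ[ℝ] ℝ) = 0 := by
        apply Module.Basis.ext (Pi.basisFun ℝ (Fin n))
        intro i
        simpa using hLi i
      ext v
      have := congrFun (congrArg (fun (f : (Fin n → ℝ) →ₗ[ℝ] ℝ) => (f : (Fin n → ℝ) → ℝ)) this) v
      simpa using this
    -- local constancy
    have hloc : ∀ x ∈ Ω, ∃ ε > 0, Metric.ball x ε ⊆ Ω ∧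
        ∀ y ∈ Metric.ball x ε, A y = A x := by
      intro x hx
      obtain ⟨ε, hε, hball⟩ := Metric.isOpen_iff.mp hΩ x hx
      refine ⟨ε, hε, hball, fun y hy => ?_⟩
      ext k j
      have hdiff : DifferentiableOn ℝ (fun y => A y k j) (Metric.ball x ε) :=
        ((hA k j).differentiableOn one_ne_zero).mono hball
      refine (convex_ball x ε).is_const_of_fderivWithin_eq_zero hdiff ?_ hy
        (Metric.mem_ball_self hε)
      intro z hz
      rw [fderivWithin_of_isOpen Metric.isOpen_ball hz]
      exact hfd z (hball hz) k j
    -- clopen argument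
    obtain ⟨x₀, hx₀⟩ := hconn.nonempty
    refine ⟨A x₀, ?_⟩
    by_contra hcon
    push_neg at hcon
    obtain ⟨z, hz, hzne⟩ := hcon
    set S : Set (Fin n → ℝ) := {x | x ∈ Ω ∧ A x = A x₀} with hS
    set T : Set (Fin n → ℝ) := {x | x ∈ Ω ∧ A x ≠ A x₀} with hT
    have hSopen : IsOpen S := by
      rw [Metric.isOpen_iff]
      rintro x ⟨hxΩ, hxA⟩
      obtain ⟨ε, hε, hball, hconst⟩ := hloc x hxΩ
      exact ⟨ε, hε, fun y hy => ⟨hball hy, (hconst y hy).trans hxA⟩⟩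
    have hTopen : IsOpen T := by
      rw [Metric.isOpen_iff]
      rintro x ⟨hxΩ, hxA⟩
      obtain ⟨ε, hε, hball, hconst⟩ := hloc x hxΩ
      exact ⟨ε, hε, fun y hy => ⟨hball hy, by rw [hconst y hy]; exact hxA⟩⟩
    have hsub : Ω ⊆ S ∪ T := by
      intro y hy
      by_cases h : A y = A x₀
      · exact Or.inl ⟨hy, h⟩
      · exact Or.inr ⟨hy, h⟩
    have h1 : (Ω ∩ S).Nonempty := ⟨x₀, hx₀, hx₀, rfl⟩
    have h2 : (Ω ∩ T).Nonempty := ⟨z, hz, hz, hzne⟩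
    obtain ⟨w, _, ⟨_, hw1⟩, ⟨_, hw2⟩⟩ := hconn.isPreconnected S T hSopen hTopen hsub h1 h2
    exact hw2 hw1
  · rintro ⟨A₀, hA₀⟩ x hx i j k
    have hz : ∀ a b : Fin n, pd (fun y => A y a b) i x = 0 ∧
        pd (fun y => A y a b) j x = 0 := by
      intro a b
      have hev : (fun y => A y a b) =ᶠ[nhds x] (fun _ => A₀ a b) := by
        filter_upwards [hΩ.mem_nhds hx] with y hy
        rw [hA₀ y hy]
      have hfe : fderiv ℝ (fun y => A y a b) x = 0 := by
        rw [hev.fderiv_eq]; exact fderiv_const_apply _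
      constructor <;> simp [pd, hfe]
    rw [(hz k j).1, (hz k i).2]
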